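/- For n = 2 and every m ≥ 2, the lower central series of the free algebra satisfies L_{m+1} = [x_1, L_m] + [x_2, L_m] + [x_1 x_2, L_m] + L_{m+2}; i.e. B_{m+1} = [x_1, B_m] + [x_2, B_m] + [x_1x_2, B_m]. -/
import Mathlib


/-- The lower central series of the free algebra `A_n = FreeAlgebra ℂ (Fin n)`,
as a chain of `ℂ`-subspaces: `lcs n 1 = A`, `lcs n (m+1) = span {[a,w] : a ∈ A, w ∈ lcs n m}`.
(The value at `0` is junk, set to `⊤`.) -/
def lcs (n : ℕ) : ℕ → Submodule ℂ (FreeAlgebra ℂ (Fin n))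
  | 0 => ⊤
  | 1 => ⊤
  | m + 2 => Submodule.span ℂ
      {y | ∃ a w, w ∈ lcs n (m + 1) ∧ y = a * w - w * a}

/-- For `g ∈ A` and a `ℂ`-subspace `V ⊆ A`, `[g, V] = span {[g,w] : w ∈ V}`. -/
def brS {n : ℕ} (g : FreeAlgebra ℂ (Fin n)) (V : Submodule ℂ (FreeAlgebra ℂ (Fin n))) :
    Submodule ℂ (FreeAlgebra ℂ (Fin n)) :=
  Submodule.span ℂ {y | ∃ w ∈ V, y = g * w - w * g}

namespace Stmt3Aux

abbrev A2 := FreeAlgebra ℂ (Fin 2)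

noncomputable abbrev xg : A2 := FreeAlgebra.ι ℂ (0 : Fin 2)
noncomputable abbrev yg : A2 := FreeAlgebra.ι ℂ (1 : Fin 2)

lemma lcs_eq (j : ℕ) :
    lcs 2 (j+2) = Submodule.span ℂ {y | ∃ a w, w ∈ lcs 2 (j+1) ∧ y = a * w - w * a} := rfl

lemma br_mem {j : ℕ} (a : A2) {w : A2} (hw : w ∈ lcs 2 (j+1)) :
    a * w - w * a ∈ lcs 2 (j+2) := by
  rw [lcs_eq]; exact Submodule.subset_span ⟨a, w, hw, rfl⟩

lemma lcs_succ_le : ∀ j : ℕ, lcs 2 (j+1) ≤ lcs 2 j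
  | 0 => le_top
  | 1 => le_top
  | (j+2) => by
      show lcs 2 ((j+1)+2) ≤ lcs 2 (j+2)
      rw [lcs_eq, lcs_eq]
      exact Submodule.span_mono (fun y ⟨a, w, hw, hy⟩ => ⟨a, w, lcs_succ_le (j+1) hw, hy⟩)

lemma span_apply_mem {S : Set A2} {U : Submodule ℂ A2} (f : A2 →ₗ[ℂ] A2)
    (h : ∀ s ∈ S, f s ∈ U) {u : A2} (hu : u ∈ Submodule.span ℂ S) : f u ∈ U := by
  have h2 : Submodule.span ℂ S ≤ U.comap f :=
    Submodule.span_le.mpr (fun s hs => Submodule.mem_comap.mpr (h s hs))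
  exact h2 hu

lemma half {X : A2} {U : Submodule ℂ A2} (h : X + X ∈ U) : X ∈ U := by
  have e : X = (2⁻¹ : ℂ) • (X + X) := by
    rw [← two_smul ℂ X, smul_smul]; norm_num
  rw [e]; exact Submodule.smul_mem _ _ h

/-- generic span-induction for brackets `[a, p*u]` over `u ∈ lcs 2 (j+2)` -/
lemma lcs_bracket_ind {j : ℕ} {U : Submodule ℂ A2} (a p : A2)
    (h : ∀ c w, w ∈ lcs 2 (j+1) → a * (p * (c*w - w*c)) - (p * (c*w - w*c)) * a ∈ U)
    {u : A2} (hu : u ∈ lcs 2 (j+2)) : a * (p * u) - (p * u) * a ∈ U := by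
  rw [lcs_eq] at hu
  have hgen : ∀ s ∈ {y : A2 | ∃ a w, w ∈ lcs 2 (j+1) ∧ y = a * w - w * a},
      ((LinearMap.mulLeft ℂ a - LinearMap.mulRight ℂ a).comp (LinearMap.mulLeft ℂ p)) s ∈ U := by
    rintro s ⟨c, w, hw, rfl⟩
    simpa using h c w hw
  simpa using span_apply_mem _ hgen hu

/-- `M_j` : the left ideal `A·L_j`. -/
def Mi (j : ℕ) : Submodule ℂ A2 := Submodule.span ℂ {y | ∃ p w, w ∈ lcs 2 j ∧ y = p * w}

lemma mem_Mi {j : ℕ} (p : A2) {w : A2} (hw : w ∈ lcs 2 j) : p * w ∈ Mi j :=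
  Submodule.subset_span ⟨p, w, hw, rfl⟩

lemma lcs_le_Mi (j : ℕ) : lcs 2 j ≤ Mi j := fun v hv => by
  simpa using mem_Mi (1 : A2) hv

lemma Mi_mul_left {j : ℕ} (p : A2) {v : A2} (hv : v ∈ Mi j) : p * v ∈ Mi j := by
  have hgen : ∀ s ∈ {y : A2 | ∃ p w, w ∈ lcs 2 j ∧ y = p * w},
      (LinearMap.mulLeft ℂ p) s ∈ Mi j := by
    rintro s ⟨q, w, hw, rfl⟩
    simpa [← mul_assoc] using mem_Mi (p*q) hw
  simpa using span_apply_mem _ hgen hv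

lemma Mi_mul_right {j : ℕ} (q : A2) {v : A2} (hv : v ∈ Mi (j+1)) : v * q ∈ Mi (j+1) := by
  have hgen : ∀ s ∈ {y : A2 | ∃ p w, w ∈ lcs 2 (j+1) ∧ y = p * w},
      (LinearMap.mulRight ℂ q) s ∈ Mi (j+1) := by
    rintro s ⟨p, w, hw, rfl⟩
    have hz : w * q - q * w ∈ lcs 2 (j+1) := by
      have h1 : -(q*w - w*q) ∈ lcs 2 (j+1) :=
        neg_mem (lcs_succ_le (j+1) (br_mem q hw))
      simpa [neg_sub] using h1
    have e : p * w * q = (p*q) * w + p * (w*q - q*w) := by noncomm_ring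
    rw [LinearMap.mulRight_apply, e]
    exact add_mem (mem_Mi _ hw) (mem_Mi _ hz)
  simpa using span_apply_mem _ hgen hv

/-- generic span-induction over `Mi j` for brackets. -/
lemma Mi_ind {j : ℕ} {U : Submodule ℂ A2} (a : A2)
    (h : ∀ p w, w ∈ lcs 2 j → a * (p*w) - (p*w) * a ∈ U)
    {v : A2} (hv : v ∈ Mi j) : a * v - v * a ∈ U := by
  have hgen : ∀ s ∈ {y : A2 | ∃ p w, w ∈ lcs 2 j ∧ y = p * w},
      (LinearMap.mulLeft ℂ a - LinearMap.mulRight ℂ a) s ∈ U := by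
    rintro s ⟨p, w, hw, rfl⟩; simpa using h p w hw
  simpa using span_apply_mem _ hgen hv

/-- KEY LEMMA: `[A, A·L_{k+1}] ⊆ L_{k+2}`. -/
theorem K1 : ∀ k : ℕ, ∀ a v : A2, v ∈ Mi (k+1) → a * v - v * a ∈ lcs 2 (k+2) := by
  intro k
  induction k with
  | zero =>
      intro a v _
      rw [lcs_eq]
      exact Submodule.subset_span ⟨a, v, Submodule.mem_top, rfl⟩
  | succ k IH =>
      -- Ψ : the basic swap relation
      have Psi : ∀ (a p c : A2), ∀ w ∈ Mi (k+1),
          (a * (p*(c*w - w*c)) - (p*(c*w - w*c)) * a)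
            + (a * (c*(p*w - w*p)) - (c*(p*w - w*p)) * a) ∈ lcs 2 (k+3) := by
        intro a p c w hw
        have h1 : (p*c)*w - w*(p*c) ∈ lcs 2 (k+2) := IH (p*c) w hw
        have h2 : p*w - w*p ∈ lcs 2 (k+2) := IH p w hw
        have t1 : a * ((p*c)*w - w*(p*c)) - ((p*c)*w - w*(p*c)) * a ∈ lcs 2 (k+3) :=
          br_mem a h1
        have t2' : c * (p*w - w*p) - (p*w - w*p) * c ∈ lcs 2 (k+3) := br_mem c h2
        have t2 : a * (c*(p*w-w*p) - (p*w-w*p)*c) - (c*(p*w-w*p) - (p*w-w*p)*c) * a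
            ∈ lcs 2 (k+3) := lcs_succ_le (k+3) (br_mem a t2')
        have key : (a * (p*(c*w - w*c)) - (p*(c*w - w*c)) * a)
              + (a * (c*(p*w - w*p)) - (c*(p*w - w*p)) * a)
            = (a * ((p*c)*w - w*(p*c)) - ((p*c)*w - w*(p*c)) * a)
              + (a * (c*(p*w-w*p) - (p*w-w*p)*c) - (c*(p*w-w*p) - (p*w-w*p)*c) * a) := by
          noncomm_ring
        rw [key]; exact add_mem t1 t2
      have Diag : ∀ (a c : A2), ∀ w ∈ Mi (k+1),
          a * (c*(c*w - w*c)) - (c*(c*w - w*c)) * a ∈ lcs 2 (k+3) := fun a c w hw =>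
        half (Psi a c c w hw)
      have FSw : ∀ (a p : A2), ∀ z ∈ lcs 2 (k+2),
          (a * (p*z) - (p*z)*a) + (p * (a*z) - (a*z)*p) ∈ lcs 2 (k+3) := by
        intro a p z hz
        have t1 : (a*p)*z - z*(a*p) ∈ lcs 2 (k+3) := br_mem (a*p) hz
        have t2 : p * (a*z - z*a) - (a*z - z*a)*p ∈ lcs 2 (k+3) :=
          lcs_succ_le (k+3) (br_mem p (br_mem a hz))
        have key : (a * (p*z) - (p*z)*a) + (p * (a*z) - (a*z)*p)
            = ((a*p)*z - z*(a*p)) + (p * (a*z - z*a) - (a*z - z*a)*p) := by noncomm_ring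
        rw [key]; exact add_mem t1 t2
      -- Φ machinery, relative to X(a)
      have Phi : ∀ a : A2,
          (∀ w ∈ Mi (k+1),
            a * (xg*(yg*w - w*yg)) - (xg*(yg*w - w*yg)) * a ∈ lcs 2 (k+3)) →
          ∀ q : A2, ∀ w ∈ Mi (k+1),
            a * (q*(yg*w - w*yg)) - (q*(yg*w - w*yg)) * a ∈ lcs 2 (k+3) := by
        intro a hXa
        have phiy : ∀ c : A2, ∀ w ∈ Mi (k+1),
            a * (yg*(c*w - w*c)) - (yg*(c*w - w*c)) * a ∈ lcs 2 (k+3) := by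
          intro c
          induction c using FreeAlgebra.induction with
          | grade0 r =>
              intro w hw
              have h0 : (algebraMap ℂ A2 r)*w - w*(algebraMap ℂ A2 r) = 0 := by
                rw [Algebra.commutes]; exact sub_self _
              rw [h0]
              simp only [mul_zero, zero_mul, sub_self]
              exact zero_mem _
          | grade1 i =>
              intro w hw
              fin_cases i
              · have h1 := Psi a yg xg w hw
                have h2 := hXa w hw
                have h3 := sub_mem h1 h2
                rw [add_sub_cancel_right] at h3
                exact h3
              · exact Diag a yg w hw
          | add c d hc hd =>
              intro w hw
              have key : a * (yg*((c+d)*w - w*(c+d))) - (yg*((c+d)*w - w*(c+d))) * a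
                  = (a * (yg*(c*w - w*c)) - (yg*(c*w - w*c)) * a)
                  + (a * (yg*(d*w - w*d)) - (yg*(d*w - w*d)) * a) := by noncomm_ring
              rw [key]; exact add_mem (hc w hw) (hd w hw)
          | mul c d hc hd =>
              intro w hw
              have hw1 : d*w ∈ Mi (k+1) := Mi_mul_left d hw
              have hw2 : w*c ∈ Mi (k+1) := Mi_mul_right c hw
              have key : a * (yg*((c*d)*w - w*(c*d))) - (yg*((c*d)*w - w*(c*d))) * a
                  = (a * (yg*(c*(d*w) - (d*w)*c)) - (yg*(c*(d*w) - (d*w)*c)) * a)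
                  + (a * (yg*(d*(w*c) - (w*c)*d)) - (yg*(d*(w*c) - (w*c)*d)) * a) := by
                noncomm_ring
              rw [key]; exact add_mem (hc (d*w) hw1) (hd (w*c) hw2)
        intro q w hw
        have h1 := Psi a q yg w hw
        have h2 := phiy q w hw
        have h3 := sub_mem h1 h2
        rw [add_sub_cancel_right] at h3
        exact h3
      -- X(a) for all a
      have Xall : ∀ a : A2, ∀ w ∈ Mi (k+1),
          a * (xg*(yg*w - w*yg)) - (xg*(yg*w - w*yg)) * a ∈ lcs 2 (k+3) := by
        intro a
        induction a using FreeAlgebra.induction with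
        | grade0 r =>
            intro w hw
            rw [Algebra.commutes, sub_self]
            exact zero_mem _
        | grade1 i =>
            intro w hw
            have hz : yg*w - w*yg ∈ lcs 2 (k+2) := IH yg w hw
            fin_cases i
            · exact half (FSw xg xg _ hz)
            · have h1 := FSw yg xg _ hz
              have h2 := Diag xg yg w hw
              have h3 := sub_mem h1 h2
              rw [add_sub_cancel_right] at h3
              exact h3
        | add a b ha hb =>
            intro w hw
            have key : (a+b) * (xg*(yg*w - w*yg)) - (xg*(yg*w - w*yg)) * (a+b)
                = (a * (xg*(yg*w - w*yg)) - (xg*(yg*w - w*yg)) * a)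
                + (b * (xg*(yg*w - w*yg)) - (xg*(yg*w - w*yg)) * b) := by noncomm_ring
            rw [key]; exact add_mem (ha w hw) (hb w hw)
        | mul a b ha hb =>
            intro w hw
            have t1 : a * ((b*xg)*(yg*w - w*yg)) - ((b*xg)*(yg*w - w*yg)) * a
                ∈ lcs 2 (k+3) := Phi a ha (b*xg) w hw
            have t2 : b * ((a*xg)*(yg*w - w*yg)) - ((a*xg)*(yg*w - w*yg)) * b
                ∈ lcs 2 (k+3) := Phi b hb (a*xg) w hw
            have hm := ha w hw
            have t3 : b * (a * (xg*(yg*w - w*yg)) - (xg*(yg*w - w*yg)) * a)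
                - (a * (xg*(yg*w - w*yg)) - (xg*(yg*w - w*yg)) * a) * b
                ∈ lcs 2 (k+4) := br_mem b hm
            have t3' := lcs_succ_le (k+3) t3
            have key : (a*b) * (xg*(yg*w - w*yg)) - (xg*(yg*w - w*yg)) * (a*b)
                = (a * ((b*xg)*(yg*w - w*yg)) - ((b*xg)*(yg*w - w*yg)) * a)
                + (b * ((a*xg)*(yg*w - w*yg)) - ((a*xg)*(yg*w - w*yg)) * b)
                - (b * (a * (xg*(yg*w - w*yg)) - (xg*(yg*w - w*yg)) * a)
                    - (a * (xg*(yg*w - w*yg)) - (xg*(yg*w - w*yg)) * a) * b) := by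
              noncomm_ring
            rw [key]; exact sub_mem (add_mem t1 t2) t3'
      -- Φ with multiplier x : [a, x[c,w]]
      have PhiX : ∀ a c : A2, ∀ w ∈ Mi (k+1),
          a * (xg*(c*w - w*c)) - (xg*(c*w - w*c)) * a ∈ lcs 2 (k+3) := by
        intro a c
        induction c using FreeAlgebra.induction with
        | grade0 r =>
            intro w hw
            have h0 : (algebraMap ℂ A2 r)*w - w*(algebraMap ℂ A2 r) = 0 := by
              rw [Algebra.commutes]; exact sub_self _
            rw [h0]
            simp only [mul_zero, zero_mul, sub_self]
            exact zero_mem _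
        | grade1 i =>
            intro w hw
            fin_cases i
            · exact Diag a xg w hw
            · exact Xall a w hw
        | add c d hc hd =>
            intro w hw
            have key : a * (xg*((c+d)*w - w*(c+d))) - (xg*((c+d)*w - w*(c+d))) * a
                = (a * (xg*(c*w - w*c)) - (xg*(c*w - w*c)) * a)
                + (a * (xg*(d*w - w*d)) - (xg*(d*w - w*d)) * a) := by noncomm_ring
            rw [key]; exact add_mem (hc w hw) (hd w hw)
        | mul c d hc hd =>
            intro w hw
            have hw1 : d*w ∈ Mi (k+1) := Mi_mul_left d hw
            have hw2 : w*c ∈ Mi (k+1) := Mi_mul_right c hw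
            have key : a * (xg*((c*d)*w - w*(c*d))) - (xg*((c*d)*w - w*(c*d))) * a
                = (a * (xg*(c*(d*w) - (d*w)*c)) - (xg*(c*(d*w) - (d*w)*c)) * a)
                + (a * (xg*(d*(w*c) - (w*c)*d)) - (xg*(d*(w*c) - (w*c)*d)) * a) := by
              noncomm_ring
            rw [key]; exact add_mem (hc (d*w) hw1) (hd (w*c) hw2)
      -- the full statement on generators
      have FULL : ∀ a p c : A2, ∀ w ∈ Mi (k+1),
          a * (p*(c*w - w*c)) - (p*(c*w - w*c)) * a ∈ lcs 2 (k+3) := by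
        intro a p c
        induction c using FreeAlgebra.induction with
        | grade0 r =>
            intro w hw
            have h0 : (algebraMap ℂ A2 r)*w - w*(algebraMap ℂ A2 r) = 0 := by
              rw [Algebra.commutes]; exact sub_self _
            rw [h0]
            simp only [mul_zero, zero_mul, sub_self]
            exact zero_mem _
        | grade1 i =>
            intro w hw
            fin_cases i
            · have h1 := Psi a p xg w hw
              have h2 := PhiX a p w hw
              have h3 := sub_mem h1 h2
              rw [add_sub_cancel_right] at h3
              exact h3
            · exact Phi a (Xall a) p w hw
        | add c d hc hd =>
            intro w hw
            have key : a * (p*((c+d)*w - w*(c+d))) - (p*((c+d)*w - w*(c+d))) * a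
                = (a * (p*(c*w - w*c)) - (p*(c*w - w*c)) * a)
                + (a * (p*(d*w - w*d)) - (p*(d*w - w*d)) * a) := by noncomm_ring
            rw [key]; exact add_mem (hc w hw) (hd w hw)
        | mul c d hc hd =>
            intro w hw
            have hw1 : d*w ∈ Mi (k+1) := Mi_mul_left d hw
            have hw2 : w*c ∈ Mi (k+1) := Mi_mul_right c hw
            have key : a * (p*((c*d)*w - w*(c*d))) - (p*((c*d)*w - w*(c*d))) * a
                = (a * (p*(c*(d*w) - (d*w)*c)) - (p*(c*(d*w) - (d*w)*c)) * a)
                + (a * (p*(d*(w*c) - (w*c)*d)) - (p*(d*(w*c) - (w*c)*d)) * a) := by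
              noncomm_ring
            rw [key]; exact add_mem (hc (d*w) hw1) (hd (w*c) hw2)
      -- conclude
      intro a v hv
      refine Mi_ind a ?_ hv
      intro p u hu
      refine lcs_bracket_ind a p ?_ hu
      intro c w hw
      exact FULL a p c w (lcs_le_Mi (k+1) hw)


section MainPart

noncomputable def Rk (k : ℕ) : Submodule ℂ A2 :=
  brS xg (lcs 2 (k+2)) + brS yg (lcs 2 (k+2)) + brS (xg*yg) (lcs 2 (k+2)) + lcs 2 (k+4)

lemma brS_mem {g : A2} {V : Submodule ℂ A2} {w : A2} (hw : w ∈ V) :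
    g*w - w*g ∈ brS g V := Submodule.subset_span ⟨w, hw, rfl⟩

lemma mem_Rk_x {k : ℕ} {w : A2} (hw : w ∈ lcs 2 (k+2)) : xg*w - w*xg ∈ Rk k :=
  Submodule.mem_sup_left (Submodule.mem_sup_left (Submodule.mem_sup_left (brS_mem hw)))

lemma mem_Rk_y {k : ℕ} {w : A2} (hw : w ∈ lcs 2 (k+2)) : yg*w - w*yg ∈ Rk k :=
  Submodule.mem_sup_left (Submodule.mem_sup_left (Submodule.mem_sup_right (brS_mem hw)))

lemma mem_Rk_xy {k : ℕ} {w : A2} (hw : w ∈ lcs 2 (k+2)) :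
    (xg*yg)*w - w*(xg*yg) ∈ Rk k :=
  Submodule.mem_sup_left (Submodule.mem_sup_right (brS_mem hw))

lemma mem_Rk_L {k : ℕ} {z : A2} (hz : z ∈ lcs 2 (k+4)) : z ∈ Rk k :=
  Submodule.mem_sup_right hz

lemma hgR (i : Fin 2) (k : ℕ) : ∀ z ∈ lcs 2 (k+2),
    (FreeAlgebra.ι ℂ i)*z - z*(FreeAlgebra.ι ℂ i) ∈ Rk k := by
  fin_cases i
  · exact fun z hz => mem_Rk_x hz
  · exact fun z hz => mem_Rk_y hz

lemma sigmaR (k : ℕ) : ∀ z ∈ lcs 2 (k+2),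
    (xg*(yg*z) - (yg*z)*xg) + (yg*(xg*z) - (xg*z)*yg) ∈ Rk k := by
  intro z hz
  have t1 : (xg*yg)*z - z*(xg*yg) ∈ Rk k := mem_Rk_xy hz
  have t2 : yg*(xg*z - z*xg) - (xg*z - z*xg)*yg ∈ lcs 2 (k+4) :=
    br_mem yg (br_mem xg hz)
  have key : (xg*(yg*z) - (yg*z)*xg) + (yg*(xg*z) - (xg*z)*yg)
      = ((xg*yg)*z - z*(xg*yg)) + (yg*(xg*z - z*xg) - (xg*z - z*xg)*yg) := by
    noncomm_ring
  rw [key]; exact add_mem t1 (mem_Rk_L t2)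

lemma PsiR (k : ℕ) (g : A2) (hg : ∀ z ∈ lcs 2 (k+2), g*z - z*g ∈ Rk k)
    (p c : A2) : ∀ w ∈ Mi (k+1),
    (g*(p*(c*w - w*c)) - (p*(c*w - w*c))*g)
      + (g*(c*(p*w - w*p)) - (c*(p*w - w*p))*g) ∈ Rk k := by
  intro w hw
  have h1 : (p*c)*w - w*(p*c) ∈ lcs 2 (k+2) := K1 k (p*c) w hw
  have h2 : p*w - w*p ∈ lcs 2 (k+2) := K1 k p w hw
  have t1 : g * ((p*c)*w - w*(p*c)) - ((p*c)*w - w*(p*c)) * g ∈ Rk k := hg _ h1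
  have t2 : g * (c*(p*w-w*p) - (p*w-w*p)*c) - (c*(p*w-w*p) - (p*w-w*p)*c) * g
      ∈ lcs 2 (k+4) := br_mem g (br_mem c h2)
  have key : (g*(p*(c*w - w*c)) - (p*(c*w - w*c))*g)
        + (g*(c*(p*w - w*p)) - (c*(p*w - w*p))*g)
      = (g * ((p*c)*w - w*(p*c)) - ((p*c)*w - w*(p*c)) * g)
        + (g * (c*(p*w-w*p) - (p*w-w*p)*c) - (c*(p*w-w*p) - (p*w-w*p)*c) * g) := by
    noncomm_ring
  rw [key]; exact add_mem t1 (mem_Rk_L t2)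

lemma DiagR (k : ℕ) (g : A2) (hg : ∀ z ∈ lcs 2 (k+2), g*z - z*g ∈ Rk k)
    (c : A2) {w : A2} (hw : w ∈ Mi (k+1)) :
    g*(c*(c*w - w*c)) - (c*(c*w - w*c))*g ∈ Rk k :=
  half (PsiR k g hg c c w hw)

lemma cA (k : ℕ) {w : A2} (hw : w ∈ Mi (k+1)) :
    xg*(yg*(xg*w - w*xg)) - (yg*(xg*w - w*xg))*xg ∈ Rk k := by
  have hz : xg*w - w*xg ∈ lcs 2 (k+2) := K1 k xg w hw
  have h1 := sigmaR k _ hz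
  have h2 := DiagR k yg (fun z hz => mem_Rk_y hz) xg hw
  have h3 := sub_mem h1 h2
  rw [add_sub_cancel_right] at h3
  exact h3

lemma cB (k : ℕ) {w : A2} (hw : w ∈ Mi (k+1)) :
    xg*(xg*(yg*w - w*yg)) - (xg*(yg*w - w*yg))*xg ∈ Rk k := by
  have h1 := PsiR k xg (fun z hz => mem_Rk_x hz) xg yg w hw
  have h3 := sub_mem h1 (cA k hw)
  rw [add_sub_cancel_right] at h3
  exact h3

lemma cC (k : ℕ) {w : A2} (hw : w ∈ Mi (k+1)) :
    yg*(xg*(yg*w - w*yg)) - (xg*(yg*w - w*yg))*yg ∈ Rk k := by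
  have hz : yg*w - w*yg ∈ lcs 2 (k+2) := K1 k yg w hw
  have h1 := sigmaR k _ hz
  have h2 := DiagR k xg (fun z hz => mem_Rk_x hz) yg hw
  have h3 := sub_mem h1 h2
  rw [add_sub_cancel_left] at h3
  exact h3

lemma cD (k : ℕ) {w : A2} (hw : w ∈ Mi (k+1)) :
    yg*(yg*(xg*w - w*xg)) - (yg*(xg*w - w*xg))*yg ∈ Rk k := by
  have h1 := PsiR k yg (fun z hz => mem_Rk_y hz) yg xg w hw
  have h3 := sub_mem h1 (cC k hw)
  rw [add_sub_cancel_right] at h3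
  exact h3

lemma EL (k : ℕ) : ∀ c : A2, ∀ w ∈ Mi (k+1), ∀ i j : Fin 2,
    (FreeAlgebra.ι ℂ i)*((FreeAlgebra.ι ℂ j)*(c*w - w*c))
      - ((FreeAlgebra.ι ℂ j)*(c*w - w*c))*(FreeAlgebra.ι ℂ i) ∈ Rk k := by
  intro c
  induction c using FreeAlgebra.induction with
  | grade0 r =>
      intro w hw i j
      have h0 : (algebraMap ℂ A2 r)*w - w*(algebraMap ℂ A2 r) = 0 := by
        rw [Algebra.commutes]; exact sub_self _
      rw [h0]
      simp only [mul_zero, zero_mul, sub_self]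
      exact zero_mem _
  | grade1 l =>
      intro w hw i j
      fin_cases i <;> fin_cases j <;> fin_cases l
      · exact DiagR k xg (fun z hz => mem_Rk_x hz) xg hw
      · exact cB k hw
      · exact cA k hw
      · exact DiagR k xg (fun z hz => mem_Rk_x hz) yg hw
      · exact DiagR k yg (fun z hz => mem_Rk_y hz) xg hw
      · exact cC k hw
      · exact cD k hw
      · exact DiagR k yg (fun z hz => mem_Rk_y hz) yg hw
  | add c d hc hd =>
      intro w hw i j
      have key : (FreeAlgebra.ι ℂ i)*((FreeAlgebra.ι ℂ j)*((c+d)*w - w*(c+d)))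
            - ((FreeAlgebra.ι ℂ j)*((c+d)*w - w*(c+d)))*(FreeAlgebra.ι ℂ i)
          = ((FreeAlgebra.ι ℂ i)*((FreeAlgebra.ι ℂ j)*(c*w - w*c))
              - ((FreeAlgebra.ι ℂ j)*(c*w - w*c))*(FreeAlgebra.ι ℂ i))
          + ((FreeAlgebra.ι ℂ i)*((FreeAlgebra.ι ℂ j)*(d*w - w*d))
              - ((FreeAlgebra.ι ℂ j)*(d*w - w*d))*(FreeAlgebra.ι ℂ i)) := by noncomm_ring
      rw [key]; exact add_mem (hc w hw i j) (hd w hw i j)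
  | mul c d hc hd =>
      intro w hw i j
      have hw1 : d*w ∈ Mi (k+1) := Mi_mul_left d hw
      have hw2 : w*c ∈ Mi (k+1) := Mi_mul_right c hw
      have key : (FreeAlgebra.ι ℂ i)*((FreeAlgebra.ι ℂ j)*((c*d)*w - w*(c*d)))
            - ((FreeAlgebra.ι ℂ j)*((c*d)*w - w*(c*d)))*(FreeAlgebra.ι ℂ i)
          = ((FreeAlgebra.ι ℂ i)*((FreeAlgebra.ι ℂ j)*(c*(d*w) - (d*w)*c))
              - ((FreeAlgebra.ι ℂ j)*(c*(d*w) - (d*w)*c))*(FreeAlgebra.ι ℂ i))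
          + ((FreeAlgebra.ι ℂ i)*((FreeAlgebra.ι ℂ j)*(d*(w*c) - (w*c)*d))
              - ((FreeAlgebra.ι ℂ j)*(d*(w*c) - (w*c)*d))*(FreeAlgebra.ι ℂ i)) := by
        noncomm_ring
      rw [key]; exact add_mem (hc (d*w) hw1 i j) (hd (w*c) hw2 i j)

lemma Bmain (k : ℕ) (i j : Fin 2) {u : A2} (hu : u ∈ lcs 2 (k+2)) :
    (FreeAlgebra.ι ℂ i)*((FreeAlgebra.ι ℂ j)*u)
      - ((FreeAlgebra.ι ℂ j)*u)*(FreeAlgebra.ι ℂ i) ∈ Rk k :=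
  lcs_bracket_ind _ _ (fun c w hw => EL k c w (lcs_le_Mi _ hw) i j) hu

lemma CM (k : ℕ) : ∀ c : A2, ∀ w ∈ Mi (k+1), ∀ (b : A2) (i : Fin 2),
    (FreeAlgebra.ι ℂ i)*(b*(c*w - w*c)) - (b*(c*w - w*c))*(FreeAlgebra.ι ℂ i) ∈ Rk k := by
  intro c
  induction c using FreeAlgebra.induction with
  | grade0 r =>
      intro w hw b i
      have h0 : (algebraMap ℂ A2 r)*w - w*(algebraMap ℂ A2 r) = 0 := by
        rw [Algebra.commutes]; exact sub_self _
      rw [h0]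
      simp only [mul_zero, zero_mul, sub_self]
      exact zero_mem _
  | grade1 l =>
      intro w hw b i
      have h1 := PsiR k (FreeAlgebra.ι ℂ i) (hgR i k) b (FreeAlgebra.ι ℂ l) w hw
      have h2 : (FreeAlgebra.ι ℂ i)*((FreeAlgebra.ι ℂ l)*(b*w - w*b))
          - ((FreeAlgebra.ι ℂ l)*(b*w - w*b))*(FreeAlgebra.ι ℂ i) ∈ Rk k :=
        Bmain k i l (K1 k b w hw)
      have h3 := sub_mem h1 h2
      rw [add_sub_cancel_right] at h3
      exact h3
  | add c d hc hd =>
      intro w hw b i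
      have key : (FreeAlgebra.ι ℂ i)*(b*((c+d)*w - w*(c+d)))
            - (b*((c+d)*w - w*(c+d)))*(FreeAlgebra.ι ℂ i)
          = ((FreeAlgebra.ι ℂ i)*(b*(c*w - w*c)) - (b*(c*w - w*c))*(FreeAlgebra.ι ℂ i))
          + ((FreeAlgebra.ι ℂ i)*(b*(d*w - w*d)) - (b*(d*w - w*d))*(FreeAlgebra.ι ℂ i)) := by
        noncomm_ring
      rw [key]; exact add_mem (hc w hw b i) (hd w hw b i)
  | mul c d hc hd =>
      intro w hw b i
      have hw1 : d*w ∈ Mi (k+1) := Mi_mul_left d hw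
      have hw2 : w*c ∈ Mi (k+1) := Mi_mul_right c hw
      have key : (FreeAlgebra.ι ℂ i)*(b*((c*d)*w - w*(c*d)))
            - (b*((c*d)*w - w*(c*d)))*(FreeAlgebra.ι ℂ i)
          = ((FreeAlgebra.ι ℂ i)*(b*(c*(d*w) - (d*w)*c))
              - (b*(c*(d*w) - (d*w)*c))*(FreeAlgebra.ι ℂ i))
          + ((FreeAlgebra.ι ℂ i)*(b*(d*(w*c) - (w*c)*d))
              - (b*(d*(w*c) - (w*c)*d))*(FreeAlgebra.ι ℂ i)) := by noncomm_ring
      rw [key]; exact add_mem (hc (d*w) hw1 b i) (hd (w*c) hw2 b i)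

lemma Zmain (k : ℕ) : ∀ a b : A2, ∀ u ∈ lcs 2 (k+2),
    a*(b*u) - (b*u)*a ∈ Rk k := by
  intro a
  induction a using FreeAlgebra.induction with
  | grade0 r =>
      intro b u hu
      rw [Algebra.commutes, sub_self]
      exact zero_mem _
  | grade1 i =>
      intro b u hu
      exact lcs_bracket_ind _ _ (fun c w hw => CM k c w (lcs_le_Mi _ hw) b i) hu
  | add a c ha hc =>
      intro b u hu
      have key : (a+c)*(b*u) - (b*u)*(a+c)
          = (a*(b*u) - (b*u)*a) + (c*(b*u) - (b*u)*c) := by noncomm_ring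
      rw [key]; exact add_mem (ha b u hu) (hc b u hu)
  | mul a c ha hc =>
      intro b u hu
      have t1 := ha (c*b) u hu
      have t2 := hc (b*a) u hu
      have hz : u*a - a*u ∈ lcs 2 (k+3) := by
        have h1 : -(a*u - u*a) ∈ lcs 2 (k+3) := neg_mem (br_mem a hu)
        simpa [neg_sub] using h1
      have t3 : c*(b*(u*a - a*u)) - (b*(u*a - a*u))*c ∈ lcs 2 (k+4) :=
        K1 (k+2) c _ (mem_Mi b hz)
      have key : (a*c)*(b*u) - (b*u)*(a*c)
          = (a*((c*b)*u) - ((c*b)*u)*a)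
          + (c*((b*a)*u) - ((b*a)*u)*c)
          + (c*(b*(u*a - a*u)) - (b*(u*a - a*u))*c) := by noncomm_ring
      rw [key]; exact add_mem (add_mem t1 t2) (mem_Rk_L t3)

end MainPart

end Stmt3Aux

/-- for `n = 2` and `m ≥ 2`,
`L_{m+1} = [x_1, L_m] + [x_2, L_m] + [x_1 x_2, L_m] + L_{m+2}`. -/
theorem stmt_3 (m : ℕ) (hm : 2 ≤ m) :
    lcs 2 (m + 1) =
      brS (FreeAlgebra.ι ℂ (0 : Fin 2)) (lcs 2 m)
      + brS (FreeAlgebra.ι ℂ (1 : Fin 2)) (lcs 2 m)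
      + brS (FreeAlgebra.ι ℂ (0 : Fin 2) * FreeAlgebra.ι ℂ (1 : Fin 2)) (lcs 2 m)
      + lcs 2 (m + 2) := by
  obtain ⟨k, rfl⟩ : ∃ k, m = k + 2 := ⟨m - 2, by omega⟩
  apply le_antisymm
  · show lcs 2 ((k+1)+2) ≤ _
    rw [Stmt3Aux.lcs_eq]
    refine Submodule.span_le.mpr ?_
    rintro s ⟨a, w, hw, rfl⟩
    have h := Stmt3Aux.Zmain k a 1 w hw
    rw [one_mul] at h
    exact h
  · have h1 : brS Stmt3Aux.xg (lcs 2 (k+2)) ≤ lcs 2 (k+3) :=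
      Submodule.span_le.mpr (by rintro s ⟨w, hw, rfl⟩; exact Stmt3Aux.br_mem _ hw)
    have h2 : brS Stmt3Aux.yg (lcs 2 (k+2)) ≤ lcs 2 (k+3) :=
      Submodule.span_le.mpr (by rintro s ⟨w, hw, rfl⟩; exact Stmt3Aux.br_mem _ hw)
    have h3 : brS (Stmt3Aux.xg * Stmt3Aux.yg) (lcs 2 (k+2)) ≤ lcs 2 (k+3) :=
      Submodule.span_le.mpr (by rintro s ⟨w, hw, rfl⟩; exact Stmt3Aux.br_mem _ hw)
    have h4 : lcs 2 (k+4) ≤ lcs 2 (k+3) := Stmt3Aux.lcs_succ_le (k+3)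
    exact sup_le (sup_le (sup_le h1 h2) h3) h4
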